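/- Let θ : ℕ → ℝ be positive and nondecreasing with n/θ_n → 0 as n → ∞ (Case C). Then ∑_{j=1}^n θ_n/(θ_n+j−1) − ∑_{j=1}^n (θ_n/j)·(n/θ_n)^j = O(n²/θ_n); that is, there exist a constant C and an index N such that for all n ≥ N, |∑_{j=1}^n θ_n/(θ_n+j−1) − ∑_{j=1}^n (θ_n/j)·(n/θ_n)^j| ≤ C·n²/θ_n. -/

import Mathlib

lemma geom_aux {x : ℝ} (hx0 : 0 ≤ x) (hx : x ≤ 1/2) (m : ℕ) :
    ∑ k ∈ Finset.range m, x ^ k ≤ 2 := by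
  have hxne : x ≠ 1 := by linarith
  rw [geom_sum_eq hxne]
  have hxm : 0 ≤ x ^ m := by positivity
  rw [div_le_iff_of_neg (by linarith : x - 1 < 0)]
  nlinarith

theorem stmt_5 (θ : ℕ → ℝ) (hpos : ∀ n, 0 < θ n) (hmono : Monotone θ)
    (hC : Filter.Tendsto (fun n : ℕ => (n : ℝ) / θ n) Filter.atTop (nhds 0)) :
    ∃ C : ℝ, ∃ N : ℕ, ∀ n ≥ N,
      |(∑ j ∈ Finset.Icc 1 n, θ n / (θ n + (j : ℝ) - 1)) -
          ∑ j ∈ Finset.Icc 1 n, (θ n / (j : ℝ)) * ((n : ℝ) / θ n) ^ j| ≤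
        C * ((n : ℝ) ^ 2 / θ n) := by
  obtain ⟨N, hN⟩ := Filter.eventually_atTop.mp
    (hC.eventually_lt_const (by norm_num : (0:ℝ) < 1/2))
  refine ⟨3, max N 1, fun n hn => ?_⟩
  have hn1 : 1 ≤ n := le_trans (le_max_right _ _) hn
  have htpos : 0 < θ n := hpos n
  have hx : (n:ℝ)/θ n < 1/2 := hN n (le_trans (le_max_left _ _) hn)
  have hx0 : 0 ≤ (n:ℝ)/θ n := div_nonneg (Nat.cast_nonneg n) htpos.le
  set t := θ n with ht
  set x := (n:ℝ)/t with hxdef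
  have hxt : x * t = n := div_mul_cancel₀ _ (ne_of_gt htpos)
  have hq0 : 0 ≤ (n:ℝ)^2/t := by positivity
  have hq : t * x^2 = (n:ℝ)^2/t := by
    rw [hxdef]; field_simp
  -- upper bound on A
  have hA_le : (∑ j ∈ Finset.Icc 1 n, t / (t + (j:ℝ) - 1)) ≤ n := by
    calc (∑ j ∈ Finset.Icc 1 n, t / (t + (j:ℝ) - 1))
        ≤ ∑ _j ∈ Finset.Icc 1 n, (1:ℝ) := by
          refine Finset.sum_le_sum fun j hj => ?_
          have hj1 : (1:ℝ) ≤ j := by exact_mod_cast (Finset.mem_Icc.mp hj).1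
          rw [div_le_one (by linarith)]
          linarith
      _ = n := by simp [Nat.card_Icc]
  -- lower bound on A
  have hA_ge : (n:ℝ) - (n:ℝ)^2/t ≤ ∑ j ∈ Finset.Icc 1 n, t / (t + (j:ℝ) - 1) := by
    calc (n:ℝ) - (n:ℝ)^2/t = ∑ _j ∈ Finset.Icc 1 n, (1 - x) := by
          rw [Finset.sum_const, Nat.card_Icc, nsmul_eq_mul]
          push_cast [hn1]
          have : (n:ℝ) * x = (n:ℝ)^2/t := by rw [hxdef]; ring
          linarith
      _ ≤ _ := by
          refine Finset.sum_le_sum fun j hj => ?_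
          obtain ⟨hj1, hjn⟩ := Finset.mem_Icc.mp hj
          have hj1' : (1:ℝ) ≤ j := by exact_mod_cast hj1
          have hjn' : (j:ℝ) ≤ n := by exact_mod_cast hjn
          rw [le_div_iff₀ (by linarith : (0:ℝ) < t + (j:ℝ) - 1)]
          nlinarith [mul_nonneg hx0 (by linarith : (0:ℝ) ≤ (j:ℝ) - 1)]
  -- split B
  have hsplit : Finset.Icc 1 n = insert 1 (Finset.Icc 2 n) := by
    ext j; simp only [Finset.mem_Icc, Finset.mem_insert]; omega
  have hB : (∑ j ∈ Finset.Icc 1 n, (t / (j:ℝ)) * x ^ j)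
      = (n:ℝ) + ∑ j ∈ Finset.Icc 2 n, (t / (j:ℝ)) * x ^ j := by
    rw [hsplit, Finset.sum_insert (by simp)]
    norm_num
    linarith [hxt]
  have htail0 : 0 ≤ ∑ j ∈ Finset.Icc 2 n, (t / (j:ℝ)) * x ^ j := by
    refine Finset.sum_nonneg fun j hj => ?_
    have : (0:ℝ) ≤ j := Nat.cast_nonneg j
    positivity
  have htail : (∑ j ∈ Finset.Icc 2 n, (t / (j:ℝ)) * x ^ j) ≤ 2 * ((n:ℝ)^2/t) := by
    calc (∑ j ∈ Finset.Icc 2 n, (t / (j:ℝ)) * x ^ j)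
        ≤ ∑ j ∈ Finset.Icc 2 n, t * x ^ j := by
          refine Finset.sum_le_sum fun j hj => ?_
          have hj2 : (1:ℝ) ≤ j := by
            have := (Finset.mem_Icc.mp hj).1; exact_mod_cast by omega
          have hxj : 0 ≤ x ^ j := by positivity
          gcongr
          exact div_le_self htpos.le hj2
      _ = t * ∑ j ∈ Finset.Icc 2 n, x ^ j := by rw [Finset.mul_sum]
      _ ≤ t * (x^2 * 2) := by
          have : (∑ j ∈ Finset.Icc 2 n, x ^ j) ≤ x^2 * 2 := by
            have hre : (∑ j ∈ Finset.Icc 2 n, x ^ j)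
                = ∑ k ∈ Finset.range (n + 1 - 2), x ^ (2 + k) := by
              rw [← Finset.Ico_add_one_right_eq_Icc, Finset.sum_Ico_eq_sum_range]
            rw [hre]
            have : (∑ k ∈ Finset.range (n+1-2), x ^ (2 + k))
                = x^2 * ∑ k ∈ Finset.range (n+1-2), x ^ k := by
              rw [Finset.mul_sum]; refine Finset.sum_congr rfl fun k _ => by ring
            rw [this]
            have hg := geom_aux hx0 (le_of_lt hx) (n+1-2)
            have hx2 : 0 ≤ x^2 := by positivity
            nlinarith
          nlinarith
      _ = 2 * ((n:ℝ)^2/t) := by rw [← hq]; ring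
  rw [abs_le]
  constructor
  · rw [hB]; nlinarith
  · rw [hB]; nlinarith
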